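/- Let X be a separable Banach space that is not strongly NSS. Then there exists a sequence (v_i) in X with lim_i v_i ≠ 0 such that for all j < k and all sign patterns θ ∈ {-1,1}^{[j,k]}, ‖θ(j)v_j + ··· + θ(k)v_k‖ < 2; moreover, for any such sequence and any (t_i) ∈ c_0, the series Σ_i t_i v_i converges in X. -/

import Mathlib

open Filter Topology

/-- `V` is an unenclosed set of the additive group `X`. -/
def UnenclosedAdd (X : Type*) [AddGroup X] [TopologicalSpace X] (V : Set X) : Prop :=
  IsOpen V ∧ (0 : X) ∈ V ∧
    ∀ v : ℕ → X, ¬ Tendsto v atTop (𝓝 0) →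
      ∃ (k : ℕ) (n : Fin (k + 1) → ℕ), StrictMono n ∧ (List.ofFn (v ∘ n)).sum ∉ V

/-- An additive Polish group is strongly NSS if it has an unenclosed set. -/
def StronglyNSSAdd (X : Type*) [AddGroup X] [TopologicalSpace X] : Prop :=
  ∃ V : Set X, UnenclosedAdd X V

/-- The condition that all signed sums of consecutive blocks of `v` have norm `< 2`. -/
def SignedBlockBound {X : Type*} [NormedAddCommGroup X] [NormedSpace ℝ X] (v : ℕ → X) : Prop :=
  ∀ j k : ℕ, j < k → ∀ θ : ℕ → ℝ, (∀ i, θ i = 1 ∨ θ i = -1) →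
    ‖∑ i ∈ Finset.Icc j k, θ i • v i‖ < 2

/-- Convexity lemma: if every `±1`-signed sum of `v` over `S` (shifted by `w`) has norm `≤ M`,
then so does any sum with coefficients in `[-1, 1]`. -/
lemma conv_lemma {X : Type*} [NormedAddCommGroup X] [NormedSpace ℝ X] (v : ℕ → X)
    (S : Finset ℕ) :
    ∀ (a : ℕ → ℝ), (∀ i ∈ S, |a i| ≤ 1) →
    ∀ (w : X) (M : ℝ),
      (∀ θ : ℕ → ℝ, (∀ i, θ i = 1 ∨ θ i = -1) → ‖w + ∑ i ∈ S, θ i • v i‖ ≤ M) →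
      ‖w + ∑ i ∈ S, a i • v i‖ ≤ M := by
  classical
  induction S using Finset.induction_on with
  | empty =>
      intro a _ w M hM
      simpa using hM (fun _ => 1) (fun _ => Or.inl rfl)
  | @insert j S hj ih =>
      intro a ha w M hM
      have haj : |a j| ≤ 1 := ha j (Finset.mem_insert_self j S)
      have habs := abs_le.mp haj
      set lam : ℝ := (a j + 1) / 2 with hlam
      have hl0 : 0 ≤ lam := by rw [hlam]; linarith [habs.1]
      have hl1 : lam ≤ 1 := by rw [hlam]; linarith [habs.2]
      have key : ∀ (s : ℝ), s = 1 ∨ s = -1 →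
          ∀ θ : ℕ → ℝ, (∀ i, θ i = 1 ∨ θ i = -1) →
            ‖(w + s • v j) + ∑ i ∈ S, θ i • v i‖ ≤ M := by
        intro s hs θ hθ
        have hθ' : ∀ i, Function.update θ j s i = 1 ∨ Function.update θ j s i = -1 := by
          intro i
          by_cases h : i = j
          · subst h; simpa using hs
          · rw [Function.update_of_ne h]; exact hθ i
        have hM' := hM (Function.update θ j s) hθ'
        rw [Finset.sum_insert hj] at hM'
        have hupdate : ∑ i ∈ S, Function.update θ j s i • v i = ∑ i ∈ S, θ i • v i := by
          refine Finset.sum_congr rfl fun i hi => ?_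
          have hij : i ≠ j := fun h => hj (by rwa [h] at hi)
          rw [Function.update_of_ne hij]
        rw [hupdate, Function.update_self] at hM'
        simpa [add_assoc] using hM'
      have h1 : ‖(w + v j) + ∑ i ∈ S, a i • v i‖ ≤ M := by
        apply ih a (fun i hi => ha i (Finset.mem_insert_of_mem hi)) (w + v j) M
        intro θ hθ
        simpa using key 1 (Or.inl rfl) θ hθ
      have h2 : ‖(w - v j) + ∑ i ∈ S, a i • v i‖ ≤ M := by
        apply ih a (fun i hi => ha i (Finset.mem_insert_of_mem hi)) (w - v j) M
        intro θ hθ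
        have := key (-1) (Or.inr rfl) θ hθ
        simpa [sub_eq_add_neg] using this
      have hid : w + ∑ i ∈ Insert.insert j S, a i • v i
          = lam • ((w + v j) + ∑ i ∈ S, a i • v i)
            + (1 - lam) • ((w - v j) + ∑ i ∈ S, a i • v i) := by
        rw [Finset.sum_insert hj]
        have haj' : a j = lam - (1 - lam) := by rw [hlam]; ring
        rw [haj']
        module
      rw [hid]
      calc ‖lam • ((w + v j) + ∑ i ∈ S, a i • v i)
            + (1 - lam) • ((w - v j) + ∑ i ∈ S, a i • v i)‖
          ≤ lam * ‖(w + v j) + ∑ i ∈ S, a i • v i‖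
            + (1 - lam) * ‖(w - v j) + ∑ i ∈ S, a i • v i‖ := by
            refine (norm_add_le _ _).trans ?_
            rw [norm_smul, norm_smul, Real.norm_eq_abs, Real.norm_eq_abs,
              abs_of_nonneg hl0, abs_of_nonneg (by linarith)]
        _ ≤ lam * M + (1 - lam) * M :=
            add_le_add (mul_le_mul_of_nonneg_left h1 hl0)
              (mul_le_mul_of_nonneg_left h2 (by linarith))
        _ = M := by ring

/-- Every term of a `SignedBlockBound` sequence has norm `< 2`. -/
lemma norm_lt_two {X : Type*} [NormedAddCommGroup X] [NormedSpace ℝ X] {v : ℕ → X}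
    (hv : SignedBlockBound v) (j : ℕ) : ‖v j‖ < 2 := by
  classical
  have h1 := hv j (j + 1) (Nat.lt_succ_self j) (fun _ => 1) (fun _ => Or.inl rfl)
  have h2 := hv j (j + 1) (Nat.lt_succ_self j)
    (fun i => if i = j then 1 else -1)
    (fun i => by by_cases h : i = j <;> simp [h])
  have hIcc : Finset.Icc j (j + 1) = {j, j + 1} := by
    ext x
    simp only [Finset.mem_Icc, Finset.mem_insert, Finset.mem_singleton]
    omega
  rw [hIcc, Finset.sum_pair (by omega : j ≠ j + 1)] at h1 h2
  simp only [one_smul] at h1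
  simp only [eq_self_iff_true, if_true, if_pos rfl, if_neg (by omega : j + 1 ≠ j),
    one_smul, neg_one_smul, neg_smul] at h2
  have hkey : ‖v j + v (j + 1) + (v j + -v (j + 1))‖ = 2 * ‖v j‖ := by
    rw [show v j + v (j + 1) + (v j + -v (j + 1)) = (2 : ℝ) • v j from by module,
      norm_smul]
    simp
  have hle := norm_add_le (v j + v (j + 1)) (v j + -v (j + 1))
  rw [hkey] at hle
  linarith

/-- Sums with coefficients bounded by `c` over arbitrary finite sets are bounded by `2c`. -/
lemma subset_bound {X : Type*} [NormedAddCommGroup X] [NormedSpace ℝ X] {v : ℕ → X}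
    (hv : SignedBlockBound v) (c : ℝ) (hc : 0 < c) (T : Finset ℕ) (a : ℕ → ℝ)
    (ha : ∀ i ∈ T, |a i| ≤ c) : ‖∑ i ∈ T, a i • v i‖ ≤ 2 * c := by
  classical
  rcases T.eq_empty_or_nonempty with rfl | hT
  · simp; positivity
  · rcases eq_or_lt_of_le (T.min'_le _ (T.max'_mem hT) : T.min' hT ≤ T.max' hT) with hjk | hjk
    · -- singleton
      have hTsub : T = {T.min' hT} := by
        apply Finset.eq_singleton_iff_unique_mem.mpr
        refine ⟨T.min'_mem hT, fun x hx => ?_⟩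
        have h1 := T.min'_le x hx
        have h2 := T.le_max' x hx
        omega
      rw [hTsub, Finset.sum_singleton, norm_smul, Real.norm_eq_abs]
      have h1 : |a (T.min' hT)| ≤ c := ha _ (T.min'_mem hT)
      have h2 : ‖v (T.min' hT)‖ ≤ 2 := le_of_lt (norm_lt_two hv _)
      calc |a (T.min' hT)| * ‖v (T.min' hT)‖ ≤ c * 2 :=
            mul_le_mul h1 h2 (norm_nonneg _) (le_of_lt hc)
        _ = 2 * c := by ring
    · -- min < max
      set j := T.min' hT with hj
      set k := T.max' hT with hk
      set a' : ℕ → ℝ := fun i => if i ∈ T then a i / c else 0 with ha'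
      have hTsub : T ⊆ Finset.Icc j k := fun x hx =>
        Finset.mem_Icc.mpr ⟨T.min'_le x hx, T.le_max' x hx⟩
      have hsum : ∑ i ∈ Finset.Icc j k, a' i • v i = ∑ i ∈ T, (a i / c) • v i := by
        rw [← Finset.sum_subset hTsub (fun x _ hx => by simp [ha', hx])]
        exact Finset.sum_congr rfl fun i hi => by simp [ha', hi]
      have hbd : ‖(0 : X) + ∑ i ∈ Finset.Icc j k, a' i • v i‖ ≤ 2 := by
        apply conv_lemma v _ a'
        · intro i _
          by_cases h : i ∈ T
          · simp only [ha', if_pos h, abs_div, abs_of_pos hc]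
            rw [div_le_one hc]; exact ha i h
          · simp [ha', h]
        · intro θ hθ
          rw [zero_add]
          exact le_of_lt (hv j k hjk θ hθ)
      rw [zero_add, hsum] at hbd
      have hscale : ∑ i ∈ T, a i • v i = c • ∑ i ∈ T, (a i / c) • v i := by
        rw [Finset.smul_sum]
        refine Finset.sum_congr rfl fun i _ => ?_
        rw [smul_smul, mul_div_cancel₀ _ (ne_of_gt hc)]
      rw [hscale, norm_smul, Real.norm_eq_abs, abs_of_pos hc]
      calc c * ‖∑ i ∈ T, (a i / c) • v i‖ ≤ c * 2 :=
            mul_le_mul_of_nonneg_left hbd (le_of_lt hc)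
        _ = 2 * c := by ring

/-- Sum of `v` over any nonempty finite set lands in `V`, given subsequence-sum control. -/
lemma finset_sum_mem {X : Type*} [NormedAddCommGroup X] {v : ℕ → X} {V : Set X}
    (h : ∀ (k : ℕ) (n : Fin (k + 1) → ℕ), StrictMono n → (List.ofFn (v ∘ n)).sum ∈ V)
    (S : Finset ℕ) (hS : S.Nonempty) : (∑ i ∈ S, v i) ∈ V := by
  classical
  obtain ⟨k, hk⟩ : ∃ k, S.card = k + 1 :=
    ⟨S.card - 1, by have := hS.card_pos; omega⟩
  set e := S.orderIsoOfFin hk with he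
  have hmono : StrictMono (fun i : Fin (k + 1) => ((e i : S) : ℕ)) := by
    intro i₁ i₂ hlt
    exact Subtype.coe_lt_coe.mpr (e.strictMono hlt)
  have := h k (fun i => ((e i : S) : ℕ)) hmono
  have hsum : (List.ofFn (v ∘ fun i => ((e i : S) : ℕ))).sum = ∑ i ∈ S, v i := by
    rw [List.sum_ofFn]
    calc ∑ i : Fin (k + 1), (v ∘ fun i => ((e i : S) : ℕ)) i
        = ∑ x : S, v (x : ℕ) := Equiv.sum_comp e.toEquiv (fun x : S => v (x : ℕ))
      _ = ∑ i ∈ S, v i := Finset.sum_coe_sort S v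
  rwa [hsum] at this

theorem stmt_8 (X : Type*) [NormedAddCommGroup X] [NormedSpace ℝ X] [CompleteSpace X]
    [TopologicalSpace.SeparableSpace X] (hX : ¬ StronglyNSSAdd X) :
    (∃ v : ℕ → X, ¬ Tendsto v atTop (𝓝 0) ∧ SignedBlockBound v) ∧
    (∀ v : ℕ → X, ¬ Tendsto v atTop (𝓝 0) → SignedBlockBound v →
      ∀ t : ℕ → ℝ, Tendsto t atTop (𝓝 0) →
        ∃ l : X, Tendsto (fun n => ∑ i ∈ Finset.range (n + 1), t i • v i) atTop (𝓝 l)) := by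
  classical
  constructor
  · -- Part 1
    have hV : ¬ UnenclosedAdd X (Metric.ball (0 : X) 1) := fun h => hX ⟨_, h⟩
    rw [UnenclosedAdd] at hV
    push_neg at hV
    obtain ⟨v, hv0, hvV⟩ := hV Metric.isOpen_ball (Metric.mem_ball_self one_pos)
    have hvV' : ∀ (k : ℕ) (n : Fin (k + 1) → ℕ), StrictMono n →
        (List.ofFn (v ∘ n)).sum ∈ Metric.ball (0 : X) 1 := by
      intro k n hn
      exact (hvV k n hn)
    refine ⟨v, hv0, ?_⟩
    intro j k hjk θ hθ
    set P := (Finset.Icc j k).filter (fun i => θ i = 1) with hP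
    set N := (Finset.Icc j k).filter (fun i => ¬ θ i = 1) with hN
    have hsplit : ∑ i ∈ Finset.Icc j k, θ i • v i = ∑ i ∈ P, v i - ∑ i ∈ N, v i := by
      rw [← Finset.sum_filter_add_sum_filter_not (Finset.Icc j k) (fun i => θ i = 1)
        (fun i => θ i • v i)]
      have e1 : ∑ i ∈ P, θ i • v i = ∑ i ∈ P, v i :=
        Finset.sum_congr rfl fun i hi => by
          rw [(Finset.mem_filter.mp hi).2, one_smul]
      have e2 : ∑ i ∈ N, θ i • v i = -∑ i ∈ N, v i := by
        rw [← Finset.sum_neg_distrib]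
        refine Finset.sum_congr rfl fun i hi => ?_
        rcases hθ i with h | h
        · exact absurd h (Finset.mem_filter.mp hi).2
        · rw [h, neg_one_smul]
      rw [e1, e2]
      abel
    rw [hsplit]
    have hball : ∀ S : Finset ℕ, S.Nonempty → ‖∑ i ∈ S, v i‖ < 1 := fun S hS =>
      mem_ball_zero_iff.mp (finset_sum_mem hvV' S hS)
    have hne : ¬ (P = ∅ ∧ N = ∅) := by
      rintro ⟨hP0, hN0⟩
      obtain ⟨x, hx⟩ := Finset.nonempty_Icc.mpr (le_of_lt hjk)
      by_cases h : θ x = 1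
      · have : x ∈ P := Finset.mem_filter.mpr ⟨hx, h⟩
        rw [hP0] at this; exact absurd this (Finset.notMem_empty x)
      · have : x ∈ N := Finset.mem_filter.mpr ⟨hx, h⟩
        rw [hN0] at this; exact absurd this (Finset.notMem_empty x)
    rcases P.eq_empty_or_nonempty with hP0 | hP1
    · rcases N.eq_empty_or_nonempty with hN0 | hN1
      · exact absurd ⟨hP0, hN0⟩ hne
      · rw [hP0]
        simp only [Finset.sum_empty, zero_sub, norm_neg]
        linarith [hball N hN1]
    · rcases N.eq_empty_or_nonempty with hN0 | hN1
      · rw [hN0]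
        simp only [Finset.sum_empty, sub_zero]
        linarith [hball P hP1]
      · calc ‖∑ i ∈ P, v i - ∑ i ∈ N, v i‖
            ≤ ‖∑ i ∈ P, v i‖ + ‖∑ i ∈ N, v i‖ := norm_sub_le _ _
          _ < 2 := by linarith [hball P hP1, hball N hN1]
  · -- Part 2
    intro v _ hv t ht
    have hsummable : Summable (fun i => t i • v i) := by
      rw [summable_iff_vanishing]
      intro e he
      obtain ⟨ε, hε, hball⟩ := Metric.mem_nhds_iff.mp he
      obtain ⟨N, hN⟩ := Metric.tendsto_atTop.mp ht (ε / 4) (by positivity)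
      refine ⟨Finset.range N, fun T hT => ?_⟩
      apply hball
      rw [mem_ball_zero_iff]
      have hbd : ‖∑ i ∈ T, t i • v i‖ ≤ 2 * (ε / 4) := by
        apply subset_bound hv (ε / 4) (by positivity) T t
        intro i hi
        have hiN : N ≤ i := by
          have := Finset.disjoint_left.mp hT hi
          simpa [Finset.mem_range, not_lt] using this
        have := hN i hiN
        rw [Real.dist_eq, sub_zero] at this
        exact le_of_lt this
      linarith
    obtain ⟨l, hl⟩ := hsummable
    refine ⟨l, ?_⟩
    have h1 := hl.tendsto_sum_nat
    have h2 := h1.comp (tendsto_add_atTop_nat 1)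
    simpa [Function.comp_def] using h2
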